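/- Let P = conv{p₀,p₁,p₂} with p₀,p₁,p₂ ∈ ℤ² the only integer points of P, and let Q = conv{q₀,q₁,q₂} be a triangle circumscribed about P with p_i = (1−x_i)q_{i+1} + x_i q_{i+2}, 0 < x_i < 1, and x_i + x_j > 1 for all 0 ≤ i < j ≤ 2. Then the lattice width of Q equals min{x₀,x₁,x₂} / (x₀x₁x₂ + (1−x₀)(1−x₁)(1−x₂)). -/

import Mathlib

open MeasureTheory
noncomputable def dot2 (u x : ℝ × ℝ) : ℝ := u.1 * x.1 + u.2 * x.2

noncomputable def widthFn (K : Set (ℝ × ℝ)) (u : ℝ × ℝ) : ℝ :=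
  sSup (dot2 u '' K) - sInf (dot2 u '' K)

noncomputable def latticeWidth (K : Set (ℝ × ℝ)) : ℝ :=
  sInf {w | ∃ u : ℤ × ℤ, u ≠ 0 ∧ w = widthFn K ((u.1 : ℝ), (u.2 : ℝ))}

def IsLatticePoint (p : ℝ × ℝ) : Prop := ∃ z : ℤ × ℤ, p = ((z.1 : ℝ), (z.2 : ℝ))

def LatticeFree (K : Set (ℝ × ℝ)) : Prop := ∀ p ∈ interior K, ¬ IsLatticePoint p

def CentrallySymmetric (K : Set (ℝ × ℝ)) : Prop := ∃ c : ℝ × ℝ, ∀ x, x ∈ K ↔ (2 : ℝ) • c - x ∈ K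

def Covers (t : ℝ) (K : Set (ℝ × ℝ)) : Prop :=
  ∀ p : ℝ × ℝ, ∃ x ∈ K, ∃ z : ℤ × ℤ, p = t • x + ((z.1 : ℝ), (z.2 : ℝ))

noncomputable def mu2 (K : Set (ℝ × ℝ)) : ℝ := sInf {t : ℝ | 0 ≤ t ∧ Covers t K}

def MeetsAllLines (t : ℝ) (K : Set (ℝ × ℝ)) : Prop :=
  ∀ p v : ℝ × ℝ, v ≠ 0 → ∃ s : ℝ, ∃ x ∈ K, ∃ z : ℤ × ℤ,
    p + s • v = t • x + ((z.1 : ℝ), (z.2 : ℝ))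

noncomputable def mu1 (K : Set (ℝ × ℝ)) : ℝ := sInf {t : ℝ | 0 ≤ t ∧ MeetsAllLines t K}


/-- key auxiliary inequality: (min x) * x1 ≤ 2D -/
lemma aux2D (x0 x1 x2 : ℝ) (h00 : 0 < x0) (h01 : x0 < 1) (h10 : 0 < x1) (h11 : x1 < 1)
    (h20 : 0 < x2) (h21 : x2 < 1) (hs01 : 1 < x0 + x1) (hs02 : 1 < x0 + x2)
    (hs12 : 1 < x1 + x2) :
    min x0 (min x1 x2) * x1 ≤ 2 * (x0 * x1 * x2 + (1 - x0) * (1 - x1) * (1 - x2)) := by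
  have hm0 : min x0 (min x1 x2) ≤ x0 := min_le_left _ _
  have hm2 : min x0 (min x1 x2) ≤ x2 := le_trans (min_le_right _ _) (min_le_right _ _)
  rcases le_or_gt (1/2) x0 with h | h
  · -- use m ≤ x2, third var x0 ≥ 1/2 : 2D - x1*x2 = x1*x2*(2x0-1) + 2(1-x1)(1-x2)(1-x0) ≥ 0
    nlinarith [mul_nonneg (mul_nonneg h10.le h20.le) (by linarith : (0:ℝ) ≤ 2*x0-1),
      mul_nonneg (mul_nonneg (by linarith : (0:ℝ) ≤ 1-x1) (by linarith : (0:ℝ) ≤ 1-x2)) (by linarith : (0:ℝ) ≤ 1-x0),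
      mul_le_mul_of_nonneg_right hm2 h10.le]
  · -- then x2 > 1/2; use m ≤ x0
    have h2 : (1/2:ℝ) < x2 := by linarith
    nlinarith [mul_nonneg (mul_nonneg h10.le h00.le) (by linarith : (0:ℝ) ≤ 2*x2-1),
      mul_nonneg (mul_nonneg (by linarith : (0:ℝ) ≤ 1-x1) (by linarith : (0:ℝ) ≤ 1-x0)) (by linarith : (0:ℝ) ≤ 1-x2),
      mul_le_mul_of_nonneg_right hm0 h10.le]

/-- symmetric version: (min x) * x0 ≤ 2D -/
lemma aux2D' (x0 x1 x2 : ℝ) (h00 : 0 < x0) (h01 : x0 < 1) (h10 : 0 < x1) (h11 : x1 < 1)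
    (h20 : 0 < x2) (h21 : x2 < 1) (hs01 : 1 < x0 + x1) (hs02 : 1 < x0 + x2)
    (hs12 : 1 < x1 + x2) :
    min x0 (min x1 x2) * x0 ≤ 2 * (x0 * x1 * x2 + (1 - x0) * (1 - x1) * (1 - x2)) := by
  have hm1 : min x0 (min x1 x2) ≤ x1 := le_trans (min_le_right _ _) (min_le_left _ _)
  have hm2 : min x0 (min x1 x2) ≤ x2 := le_trans (min_le_right _ _) (min_le_right _ _)
  rcases le_or_gt (1/2) x1 with h | h
  · nlinarith [mul_nonneg (mul_nonneg h00.le h20.le) (by linarith : (0:ℝ) ≤ 2*x1-1),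
      mul_nonneg (mul_nonneg (by linarith : (0:ℝ) ≤ 1-x0) (by linarith : (0:ℝ) ≤ 1-x2)) (by linarith : (0:ℝ) ≤ 1-x1),
      mul_le_mul_of_nonneg_right hm2 h00.le]
  · have h2 : (1/2:ℝ) < x2 := by linarith
    nlinarith [mul_nonneg (mul_nonneg h00.le h10.le) (by linarith : (0:ℝ) ≤ 2*x2-1),
      mul_nonneg (mul_nonneg (by linarith : (0:ℝ) ≤ 1-x0) (by linarith : (0:ℝ) ≤ 1-x1)) (by linarith : (0:ℝ) ≤ 1-x2),
      mul_le_mul_of_nonneg_right hm1 h00.le]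
lemma dot2_lin (u : ℝ × ℝ) : IsLinearMap ℝ (dot2 u) := by
  constructor
  · intro a b; simp only [dot2, Prod.fst_add, Prod.snd_add]; ring
  · intro c a; simp only [dot2, Prod.smul_fst, Prod.smul_snd, smul_eq_mul]; ring

lemma dot2_combo (u A B : ℝ × ℝ) (c d : ℝ) :
    dot2 u (c • A + d • B) = c * dot2 u A + d * dot2 u B := by
  simp only [dot2, Prod.fst_add, Prod.snd_add, Prod.smul_fst, Prod.smul_snd, smul_eq_mul]; ring

lemma width_eval (u : ℝ × ℝ) (q : Fin 3 → ℝ × ℝ) :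
    widthFn (convexHull ℝ (Set.range q)) u =
      max (dot2 u (q 0)) (max (dot2 u (q 1)) (dot2 u (q 2))) -
      min (dot2 u (q 0)) (min (dot2 u (q 1)) (dot2 u (q 2))) := by
  set M := max (dot2 u (q 0)) (max (dot2 u (q 1)) (dot2 u (q 2))) with hM
  set N := min (dot2 u (q 0)) (min (dot2 u (q 1)) (dot2 u (q 2))) with hN
  have hub : ∀ y ∈ dot2 u '' convexHull ℝ (Set.range q), y ≤ M := by
    rintro y ⟨w, hw, rfl⟩
    have hsub : convexHull ℝ (Set.range q) ⊆ {v | dot2 u v ≤ M} := by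
      apply convexHull_min _ (convex_halfSpace_le (dot2_lin u) M)
      rintro v ⟨i, rfl⟩
      fin_cases i <;> simp only [Set.mem_setOf_eq]
      · exact le_max_left _ _
      · exact le_max_of_le_right (le_max_left _ _)
      · exact le_max_of_le_right (le_max_right _ _)
    exact hsub hw
  have hlb : ∀ y ∈ dot2 u '' convexHull ℝ (Set.range q), N ≤ y := by
    rintro y ⟨w, hw, rfl⟩
    have hsub : convexHull ℝ (Set.range q) ⊆ {v | N ≤ dot2 u v} := by
      apply convexHull_min _ (convex_halfSpace_ge (dot2_lin u) N)
      rintro v ⟨i, rfl⟩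
      fin_cases i <;> simp only [Set.mem_setOf_eq]
      · exact min_le_left _ _
      · exact le_trans (min_le_right _ _) (min_le_left _ _)
      · exact le_trans (min_le_right _ _) (min_le_right _ _)
    exact hsub hw
  have hmem : ∀ i : Fin 3, dot2 u (q i) ∈ dot2 u '' convexHull ℝ (Set.range q) :=
    fun i => ⟨q i, subset_convexHull ℝ _ (Set.mem_range_self i), rfl⟩
  have hMmem : M ∈ dot2 u '' convexHull ℝ (Set.range q) := by
    rcases max_choice (dot2 u (q 0)) (max (dot2 u (q 1)) (dot2 u (q 2))) with h | h
    · rw [hM, h]; exact hmem 0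
    · rcases max_choice (dot2 u (q 1)) (dot2 u (q 2)) with h' | h' <;> rw [hM, h, h']
      · exact hmem 1
      · exact hmem 2
  have hNmem : N ∈ dot2 u '' convexHull ℝ (Set.range q) := by
    rcases min_choice (dot2 u (q 0)) (min (dot2 u (q 1)) (dot2 u (q 2))) with h | h
    · rw [hN, h]; exact hmem 0
    · rcases min_choice (dot2 u (q 1)) (dot2 u (q 2)) with h' | h' <;> rw [hN, h, h']
      · exact hmem 1
      · exact hmem 2
  have h1 : sSup (dot2 u '' convexHull ℝ (Set.range q)) = M :=
    IsGreatest.csSup_eq ⟨hMmem, fun y hy => hub y hy⟩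
  have h2 : sInf (dot2 u '' convexHull ℝ (Set.range q)) = N :=
    IsLeast.csInf_eq ⟨hNmem, fun y hy => hlb y hy⟩
  rw [widthFn, h1, h2]

lemma max3_min3_le (g0 g1 g2 c : ℝ) (hc : 0 ≤ c)
    (h10 : g1 - g0 ≤ c) (h01 : g0 - g1 ≤ c) (h21 : g2 - g1 ≤ c) (h12 : g1 - g2 ≤ c)
    (h02 : g0 - g2 ≤ c) (h20 : g2 - g0 ≤ c) :
    max g0 (max g1 g2) - min g0 (min g1 g2) ≤ c := by
  have key : max g0 (max g1 g2) ≤ min g0 (min g1 g2) + c := by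
    rcases min_choice g1 g2 with h | h <;> rcases min_choice g0 (min g1 g2) with h' | h' <;>
      rw [h'] <;> simp only [max_le_iff] <;> rw [h] at * <;>
      refine ⟨by linarith, by linarith, by linarith⟩
  linarith [min_le_left g0 (min g1 g2)]

lemma uniq2 (A1 A2 B1 B2 s t : ℝ) (hdet : A1 * B2 - A2 * B1 ≠ 0)
    (h1 : s * A1 + t * B1 = 0) (h2 : s * A2 + t * B2 = 0) : s = 0 ∧ t = 0 := by
  constructor
  · have h : s * (A1 * B2 - A2 * B1) = 0 := by linear_combination B2 * h1 - B1 * h2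
    exact (mul_eq_zero.mp h).resolve_right hdet
  · have h : t * (A1 * B2 - A2 * B1) = 0 := by linear_combination A1 * h2 - A2 * h1
    exact (mul_eq_zero.mp h).resolve_right hdet

lemma tri_mem (p : Fin 3 → ℝ × ℝ) (s t : ℝ) (hs : 0 ≤ s) (ht : 0 ≤ t) (hst : s + t ≤ 1) :
    (1 - s - t) • p 0 + s • p 1 + t • p 2 ∈ convexHull ℝ (Set.range p) := by
  have h1 : ∑ i, (![1 - s - t, s, t]) i = 1 := by
    simp only [Fin.sum_univ_three, Matrix.cons_val_zero, Matrix.cons_val_one, Matrix.head_cons,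
      Matrix.cons_val_two, Matrix.tail_cons]
    ring
  have hw0 : ∀ i ∈ (Finset.univ : Finset (Fin 3)), 0 ≤ (![1 - s - t, s, t]) i := by
    intro i _; fin_cases i <;> simp <;> linarith
  have hz : ∀ i ∈ (Finset.univ : Finset (Fin 3)), p i ∈ Set.range p :=
    fun i _ => Set.mem_range_self i
  have := Finset.centerMass_mem_convexHull (Finset.univ : Finset (Fin 3)) hw0
    (by rw [h1]; norm_num) hz
  rw [Finset.centerMass_eq_of_sum_1 _ _ h1, Fin.sum_univ_three] at this
  simpa only [Matrix.cons_val_zero, Matrix.cons_val_one, Matrix.head_cons,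
    Matrix.cons_val_two, Matrix.tail_cons] using this
lemma det_ne (p : Fin 3 → ℝ × ℝ) (haff : AffineIndependent ℝ p) :
    (p 1 - p 0).1 * (p 2 - p 0).2 - (p 1 - p 0).2 * (p 2 - p 0).1 ≠ 0 := by
  intro hdet
  obtain ⟨c1, c2, hc1, hc2, hne⟩ : ∃ c1 c2 : ℝ,
      c1 * (p 1 - p 0).1 + c2 * (p 2 - p 0).1 = 0 ∧
      c1 * (p 1 - p 0).2 + c2 * (p 2 - p 0).2 = 0 ∧ ¬(c1 = 0 ∧ c2 = 0) := by
    set v1 := p 1 - p 0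
    set v2 := p 2 - p 0
    by_cases h2 : v1.2 = 0 ∧ v2.2 = 0
    · by_cases h1 : v1.1 = 0 ∧ v2.1 = 0
      · exact ⟨1, 0, by rw [h1.1]; ring, by rw [h2.1]; ring, by simp⟩
      · refine ⟨-v2.1, v1.1, by ring, by rw [h2.1, h2.2]; ring, ?_⟩
        rintro ⟨ha, hb⟩
        exact h1 ⟨hb, by simpa using ha⟩
    · refine ⟨v2.2, -v1.2, by linear_combination hdet, by ring, ?_⟩
      rintro ⟨ha, hb⟩
      exact h2 ⟨by simpa using hb, ha⟩
  have key := affineIndependent_iff.mp haff Finset.univ ![-c1 - c2, c1, c2] ?_ ?_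
  · have e1 : c1 = 0 := by simpa using key 1 (Finset.mem_univ _)
    have e2 : c2 = 0 := by simpa using key 2 (Finset.mem_univ _)
    exact hne ⟨e1, e2⟩
  · simp only [Fin.sum_univ_three, Matrix.cons_val_zero, Matrix.cons_val_one, Matrix.head_cons,
      Matrix.cons_val_two, Matrix.tail_cons]
    ring
  · simp only [Fin.sum_univ_three, Matrix.cons_val_zero, Matrix.cons_val_one, Matrix.head_cons,
      Matrix.cons_val_two, Matrix.tail_cons]
    have : (-c1 - c2) • p 0 + c1 • p 1 + c2 • p 2 =
        (c1 * (p 1 - p 0).1 + c2 * (p 2 - p 0).1,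
         c1 * (p 1 - p 0).2 + c2 * (p 2 - p 0).2) := by
      apply Prod.ext <;>
        simp only [Prod.fst_add, Prod.snd_add, Prod.smul_fst, Prod.smul_snd, smul_eq_mul,
          Prod.fst_sub, Prod.snd_sub] <;> ring
    rw [this, hc1, hc2]
    rfl

lemma gen_lemma (p : Fin 3 → ℝ × ℝ)
    (honly : ∀ y ∈ convexHull ℝ (Set.range p), IsLatticePoint y → ∃ i, y = p i)
    (A1 A2 B1 B2 P1 P2 : ℤ)
    (hp0 : p 0 = ((P1 : ℝ), (P2 : ℝ)))
    (hp1 : p 1 = (((P1 + A1 : ℤ) : ℝ), ((P2 + A2 : ℤ) : ℝ)))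
    (hp2 : p 2 = (((P1 + B1 : ℤ) : ℝ), ((P2 + B2 : ℤ) : ℝ)))
    (hdet : (A1 * B2 - A2 * B1 : ℤ) ≠ 0) :
    ∀ E1 E2 : ℤ, ∃ m n : ℤ, E1 = m * A1 + n * B1 ∧ E2 = m * A2 + n * B2 := by
  have hdR : ((A1 : ℝ) * B2 - (A2 : ℝ) * B1) ≠ 0 := by
    intro h; apply hdet; exact_mod_cast h
  intro E1 E2
  set α : ℝ := ((E1 : ℝ) * B2 - (E2 : ℝ) * B1) / ((A1 : ℝ) * B2 - (A2 : ℝ) * B1) with hα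
  set β : ℝ := ((A1 : ℝ) * E2 - (A2 : ℝ) * E1) / ((A1 : ℝ) * B2 - (A2 : ℝ) * B1) with hβ
  have hE1 : (E1 : ℝ) = α * A1 + β * B1 := by
    rw [hα, hβ, div_mul_eq_mul_div, div_mul_eq_mul_div, ← add_div, eq_div_iff hdR]; ring
  have hE2 : (E2 : ℝ) = α * A2 + β * B2 := by
    rw [hα, hβ, div_mul_eq_mul_div, div_mul_eq_mul_div, ← add_div, eq_div_iff hdR]; ring
  set m : ℤ := ⌊α⌋
  set n : ℤ := ⌊β⌋
  set s : ℝ := Int.fract α with hsdef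
  set t : ℝ := Int.fract β with htdef
  have hs0 : 0 ≤ s := Int.fract_nonneg α
  have ht0 : 0 ≤ t := Int.fract_nonneg β
  have hs1 : s < 1 := Int.fract_lt_one α
  have ht1 : t < 1 := Int.fract_lt_one β
  have hsa : s = α - m := rfl
  have hta : t = β - n := rfl
  set z1 : ℤ := E1 - m * A1 - n * B1 with hz1
  set z2 : ℤ := E2 - m * A2 - n * B2 with hz2
  have hz1R : (z1 : ℝ) = s * A1 + t * B1 := by
    rw [hz1, hsa, hta]; push_cast; rw [hE1]; ring
  have hz2R : (z2 : ℝ) = s * A2 + t * B2 := by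
    rw [hz2, hsa, hta]; push_cast; rw [hE2]; ring
  by_cases hst0 : s = 0 ∧ t = 0
  · refine ⟨m, n, ?_, ?_⟩
    · have h0 : (z1 : ℝ) = 0 := by rw [hz1R, hst0.1, hst0.2]; ring
      have : z1 = 0 := by exact_mod_cast h0
      rw [hz1] at this; linarith [this]
    · have h0 : (z2 : ℝ) = 0 := by rw [hz2R, hst0.1, hst0.2]; ring
      have : z2 = 0 := by exact_mod_cast h0
      rw [hz2] at this; linarith [this]
  · exfalso
    rcases le_or_gt (s + t) 1 with hst | hst
    · -- y = p0 + s*A + t*B is a lattice point of the triangle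
      set y : ℝ × ℝ := (((P1 + z1 : ℤ) : ℝ), ((P2 + z2 : ℤ) : ℝ)) with hy
      have hyeq : (1 - s - t) • p 0 + s • p 1 + t • p 2 = y := by
        rw [hp0, hp1, hp2, hy]
        apply Prod.ext
        · simp only [Prod.fst_add, Prod.smul_fst, smul_eq_mul]
          push_cast
          linear_combination (-1 : ℝ) * hz1R
        · simp only [Prod.snd_add, Prod.smul_snd, smul_eq_mul]
          push_cast
          linear_combination (-1 : ℝ) * hz2R
      have hyhull : y ∈ convexHull ℝ (Set.range p) := by
        rw [← hyeq]; exact tri_mem p s t hs0 ht0 hst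
      obtain ⟨i, hyp⟩ := honly y hyhull ⟨(P1 + z1, P2 + z2), rfl⟩
      fin_cases i
      · replace hyp : y = p 0 := hyp
        rw [hp0, hy] at hyp
        have h1 : ((P1 + z1 : ℤ) : ℝ) = (P1 : ℝ) := congrArg Prod.fst hyp
        have h2 : ((P2 + z2 : ℤ) : ℝ) = (P2 : ℝ) := congrArg Prod.snd hyp
        push_cast at h1 h2
        have e1 : s * (A1:ℝ) + t * B1 = 0 := by rw [← hz1R]; linarith
        have e2 : s * (A2:ℝ) + t * B2 = 0 := by rw [← hz2R]; linarith
        exact hst0 (uniq2 _ _ _ _ _ _ hdR e1 e2)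
      · replace hyp : y = p 1 := hyp
        rw [hp1, hy] at hyp
        have h1 : ((P1 + z1 : ℤ) : ℝ) = ((P1 + A1 : ℤ) : ℝ) := congrArg Prod.fst hyp
        have h2 : ((P2 + z2 : ℤ) : ℝ) = ((P2 + A2 : ℤ) : ℝ) := congrArg Prod.snd hyp
        push_cast at h1 h2
        have e1 : (s - 1) * (A1:ℝ) + t * B1 = 0 := by linear_combination h1 - hz1R
        have e2 : (s - 1) * (A2:ℝ) + t * B2 = 0 := by linear_combination h2 - hz2R
        have := (uniq2 _ _ _ _ _ _ hdR e1 e2).1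
        linarith
      · replace hyp : y = p 2 := hyp
        rw [hp2, hy] at hyp
        have h1 : ((P1 + z1 : ℤ) : ℝ) = ((P1 + B1 : ℤ) : ℝ) := congrArg Prod.fst hyp
        have h2 : ((P2 + z2 : ℤ) : ℝ) = ((P2 + B2 : ℤ) : ℝ) := congrArg Prod.snd hyp
        push_cast at h1 h2
        have e1 : s * (A1:ℝ) + (t - 1) * B1 = 0 := by linear_combination h1 - hz1R
        have e2 : s * (A2:ℝ) + (t - 1) * B2 = 0 := by linear_combination h2 - hz2R
        have := (uniq2 _ _ _ _ _ _ hdR e1 e2).2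
        linarith
    · -- use the reflected point
      set s' : ℝ := 1 - s with hs'
      set t' : ℝ := 1 - t with ht'
      have hs'0 : 0 ≤ s' := by rw [hs']; linarith
      have ht'0 : 0 ≤ t' := by rw [ht']; linarith
      have hst' : s' + t' ≤ 1 := by rw [hs', ht']; linarith
      set y : ℝ × ℝ := (((P1 + A1 + B1 - z1 : ℤ) : ℝ), ((P2 + A2 + B2 - z2 : ℤ) : ℝ)) with hy
      have hyeq : (1 - s' - t') • p 0 + s' • p 1 + t' • p 2 = y := by
        rw [hp0, hp1, hp2, hy, hs', ht']
        apply Prod.ext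
        · simp only [Prod.fst_add, Prod.smul_fst, smul_eq_mul]
          push_cast
          linear_combination hz1R
        · simp only [Prod.snd_add, Prod.smul_snd, smul_eq_mul]
          push_cast
          linear_combination hz2R
      have hyhull : y ∈ convexHull ℝ (Set.range p) := by
        rw [← hyeq]; exact tri_mem p s' t' hs'0 ht'0 hst'
      obtain ⟨i, hyp⟩ := honly y hyhull ⟨(P1 + A1 + B1 - z1, P2 + A2 + B2 - z2), rfl⟩
      fin_cases i
      · replace hyp : y = p 0 := hyp
        rw [hp0, hy] at hyp
        have h1 : ((P1 + A1 + B1 - z1 : ℤ) : ℝ) = (P1 : ℝ) := congrArg Prod.fst hyp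
        have h2 : ((P2 + A2 + B2 - z2 : ℤ) : ℝ) = (P2 : ℝ) := congrArg Prod.snd hyp
        push_cast at h1 h2
        have e1 : s' * (A1:ℝ) + t' * B1 = 0 := by
          rw [hs', ht']; linear_combination h1 + hz1R
        have e2 : s' * (A2:ℝ) + t' * B2 = 0 := by
          rw [hs', ht']; linear_combination h2 + hz2R
        have := (uniq2 _ _ _ _ _ _ hdR e1 e2).1
        rw [hs'] at this; linarith
      · replace hyp : y = p 1 := hyp
        rw [hp1, hy] at hyp
        have h1 : ((P1 + A1 + B1 - z1 : ℤ) : ℝ) = ((P1 + A1 : ℤ) : ℝ) := congrArg Prod.fst hyp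
        have h2 : ((P2 + A2 + B2 - z2 : ℤ) : ℝ) = ((P2 + A2 : ℤ) : ℝ) := congrArg Prod.snd hyp
        push_cast at h1 h2
        have e1 : (s' - 1) * (A1:ℝ) + t' * B1 = 0 := by
          rw [hs', ht']; linear_combination h1 + hz1R
        have e2 : (s' - 1) * (A2:ℝ) + t' * B2 = 0 := by
          rw [hs', ht']; linear_combination h2 + hz2R
        have := (uniq2 _ _ _ _ _ _ hdR e1 e2).2
        rw [ht'] at this; linarith
      · replace hyp : y = p 2 := hyp
        rw [hp2, hy] at hyp
        have h1 : ((P1 + A1 + B1 - z1 : ℤ) : ℝ) = ((P1 + B1 : ℤ) : ℝ) := congrArg Prod.fst hyp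
        have h2 : ((P2 + A2 + B2 - z2 : ℤ) : ℝ) = ((P2 + B2 : ℤ) : ℝ) := congrArg Prod.snd hyp
        push_cast at h1 h2
        have e1 : s' * (A1:ℝ) + (t' - 1) * B1 = 0 := by
          rw [hs', ht']; linear_combination h1 + hz1R
        have e2 : s' * (A2:ℝ) + (t' - 1) * B2 = 0 := by
          rw [hs', ht']; linear_combination h2 + hz2R
        have := (uniq2 _ _ _ _ _ _ hdR e1 e2).1
        rw [hs'] at this; linarith
set_option maxHeartbeats 1000000 in
lemma core (x0 x1 x2 : ℝ) (h00 : 0 < x0) (h01 : x0 < 1) (h10 : 0 < x1) (h11 : x1 < 1)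
    (h20 : 0 < x2) (h21 : x2 < 1) (hs01 : 1 < x0 + x1) (hs02 : 1 < x0 + x2)
    (hs12 : 1 < x1 + x2) (a b : ℤ) (hab : ¬(a = 0 ∧ b = 0)) (g0 g1 g2 : ℝ)
    (e1 : (x0*x1*x2 + (1-x0)*(1-x1)*(1-x2)) * (g1 - g0) = -x0*(a:ℝ) + (x0+x1-1)*(b:ℝ))
    (e2 : (x0*x1*x2 + (1-x0)*(1-x1)*(1-x2)) * (g2 - g1) = (1-x2)*(a:ℝ) - x1*(b:ℝ)) :
    min x0 (min x1 x2) / (x0*x1*x2 + (1-x0)*(1-x1)*(1-x2)) ≤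
      max g0 (max g1 g2) - min g0 (min g1 g2) := by
  have hD : 0 < x0*x1*x2 + (1-x0)*(1-x1)*(1-x2) := by
    have a1 : 0 < x0*x1*x2 := by positivity
    have a2 : 0 < (1-x0)*(1-x1)*(1-x2) := by
      apply mul_pos (mul_pos (by linarith) (by linarith)); linarith
    linarith
  set D : ℝ := x0*x1*x2 + (1-x0)*(1-x1)*(1-x2) with hDdef
  set m : ℝ := min x0 (min x1 x2) with hmdef
  have hm0 : m ≤ x0 := min_le_left _ _
  have hm1 : m ≤ x1 := le_trans (min_le_right _ _) (min_le_left _ _)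
  have hm2 : m ≤ x2 := le_trans (min_le_right _ _) (min_le_right _ _)
  have hmpos : 0 < m := lt_min h00 (lt_min h10 h20)
  by_contra hcon
  push_neg at hcon
  have B1 : g1 ≤ max g0 (max g1 g2) := le_max_of_le_right (le_max_left _ _)
  have B2 : g2 ≤ max g0 (max g1 g2) := le_max_of_le_right (le_max_right _ _)
  have B0 : g0 ≤ max g0 (max g1 g2) := le_max_left _ _
  have C0 : min g0 (min g1 g2) ≤ g0 := min_le_left _ _
  have C1 : min g0 (min g1 g2) ≤ g1 := le_trans (min_le_right _ _) (min_le_left _ _)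
  have C2 : min g0 (min g1 g2) ≤ g2 := le_trans (min_le_right _ _) (min_le_right _ _)
  have e3 : D * (g0 - g2) = (x0+x2-1)*(a:ℝ) + (1-x0)*(b:ℝ) := by linear_combination -e1 - e2
  set d01 : ℝ := -x0*(a:ℝ) + (x0+x1-1)*(b:ℝ) with hd01
  set d12 : ℝ := (1-x2)*(a:ℝ) - x1*(b:ℝ) with hd12
  set d20 : ℝ := (x0+x2-1)*(a:ℝ) + (1-x0)*(b:ℝ) with hd20
  have W10 : (g1 - g0) * D < m := (lt_div_iff₀ hD).mp (by linarith)
  have W01 : (g0 - g1) * D < m := (lt_div_iff₀ hD).mp (by linarith)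
  have W21 : (g2 - g1) * D < m := (lt_div_iff₀ hD).mp (by linarith)
  have W12 : (g1 - g2) * D < m := (lt_div_iff₀ hD).mp (by linarith)
  have W02 : (g0 - g2) * D < m := (lt_div_iff₀ hD).mp (by linarith)
  have W20 : (g2 - g0) * D < m := (lt_div_iff₀ hD).mp (by linarith)
  have hd01u : d01 < m := by rw [← e1]; linarith [W10]
  have hd01l : -m < d01 := by rw [← e1]; linarith [W01]
  have hd12u : d12 < m := by rw [← e2]; linarith [W21]
  have hd12l : -m < d12 := by rw [← e2]; linarith [W12]
  have hd20u : d20 < m := by rw [← e3]; linarith [W02]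
  have hd20l : -m < d20 := by rw [← e3]; linarith [W20]
  have ea : D*(a:ℝ) = (x0-1)*d01 + (x0+x1-1)*d20 := by
    rw [hd01, hd20, hDdef]; ring
  have eb : D*(b:ℝ) = (1-x2-x0)*d12 + (1-x2)*d20 := by
    rw [hd12, hd20, hDdef]; ring
  have t1 : (1-x0) * (-d01) ≤ (1-x0) * m :=
    mul_le_mul_of_nonneg_left (by linarith) (by linarith)
  have t1' : (1-x0) * d01 ≤ (1-x0) * m :=
    mul_le_mul_of_nonneg_left (by linarith) (by linarith)
  have t2 : (x0+x1-1) * d20 < (x0+x1-1) * m :=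
    (mul_lt_mul_iff_right₀ (by linarith)).mpr hd20u
  have t2' : (x0+x1-1) * (-d20) < (x0+x1-1) * m :=
    (mul_lt_mul_iff_right₀ (by linarith)).mpr (by linarith)
  have t3 : (x0+x2-1) * d12 < (x0+x2-1) * m :=
    (mul_lt_mul_iff_right₀ (by linarith)).mpr hd12u
  have t3' : (x0+x2-1) * (-d12) < (x0+x2-1) * m :=
    (mul_lt_mul_iff_right₀ (by linarith)).mpr (by linarith)
  have t4 : (1-x2) * d20 < (1-x2) * m :=
    (mul_lt_mul_iff_right₀ (by linarith)).mpr hd20u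
  have t4' : (1-x2) * (-d20) < (1-x2) * m :=
    (mul_lt_mul_iff_right₀ (by linarith)).mpr (by linarith)
  have hau : D*(a:ℝ) < x1 * m := by linarith [t1, t2, ea]
  have hal : -(x1*m) < D*(a:ℝ) := by linarith [t1', t2', ea]
  have hbu : D*(b:ℝ) < x0 * m := by linarith [t3', t4, eb]
  have hbl : -(x0*m) < D*(b:ℝ) := by linarith [t3, t4', eb]
  have h2Da : x1 * m ≤ 2 * D := by
    have := aux2D x0 x1 x2 h00 h01 h10 h11 h20 h21 hs01 hs02 hs12
    rw [← hmdef, ← hDdef] at this; linarith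
  have h2Db : x0 * m ≤ 2 * D := by
    have := aux2D' x0 x1 x2 h00 h01 h10 h11 h20 h21 hs01 hs02 hs12
    rw [← hmdef, ← hDdef] at this; linarith
  have haR : (a:ℝ) < 2 := by
    have h : D*(a:ℝ) < D*2 := by linarith
    exact (mul_lt_mul_iff_right₀ hD).mp h
  have haL : (-2:ℝ) < (a:ℝ) := by
    have h : D*(-2:ℝ) < D*(a:ℝ) := by linarith
    exact (mul_lt_mul_iff_right₀ hD).mp h
  have hbRR : (b:ℝ) < 2 := by
    have h : D*(b:ℝ) < D*2 := by linarith
    exact (mul_lt_mul_iff_right₀ hD).mp h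
  have hbL : (-2:ℝ) < (b:ℝ) := by
    have h : D*(-2:ℝ) < D*(b:ℝ) := by linarith
    exact (mul_lt_mul_iff_right₀ hD).mp h
  have ha1 : a ≤ 1 := by
    have : a < 2 := by exact_mod_cast haR
    omega
  have ha2 : -1 ≤ a := by
    have : (-2:ℤ) < a := by exact_mod_cast haL
    omega
  have hb1 : b ≤ 1 := by
    have : b < 2 := by exact_mod_cast hbRR
    omega
  have hb2 : -1 ≤ b := by
    have : (-2:ℤ) < b := by exact_mod_cast hbL
    omega
  interval_cases a <;> interval_cases b <;>
    first
      | exact hab ⟨rfl, rfl⟩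
      | (push_cast at hd01 hd12 hd20; linarith [hd01u, hd01l, hd12u, hd12l, hd20u, hd20l])

set_option maxHeartbeats 1000000 in
theorem latticeWidth_triangle_formula (p q : Fin 3 → ℝ × ℝ) (x : Fin 3 → ℝ)
    (hpz : ∀ i, IsLatticePoint (p i)) (haff : AffineIndependent ℝ p)
    (honly : ∀ y ∈ convexHull ℝ (Set.range p), IsLatticePoint y → ∃ i, y = p i)
    (hx : ∀ i, 0 < x i ∧ x i < 1)
    (hpq : ∀ i, p i = (1 - x i) • q (i + 1) + x i • q (i + 2))
    (ha : ∀ i j : Fin 3, i ≠ j → 1 < x i + x j) :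
    latticeWidth (convexHull ℝ (Set.range q)) =
      min (x 0) (min (x 1) (x 2)) /
        (x 0 * x 1 * x 2 + (1 - x 0) * (1 - x 1) * (1 - x 2)) := by
  obtain ⟨Z0, hZ0⟩ := hpz 0
  obtain ⟨Z1, hZ1⟩ := hpz 1
  obtain ⟨Z2, hZ2⟩ := hpz 2
  set x0 := x 0 with hx0d
  set x1 := x 1 with hx1d
  set x2 := x 2 with hx2d
  obtain ⟨h00, h01⟩ := hx 0
  obtain ⟨h10, h11⟩ := hx 1
  obtain ⟨h20, h21⟩ := hx 2
  have hs01 : 1 < x0 + x1 := ha 0 1 (by decide)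
  have hs02 : 1 < x0 + x2 := ha 0 2 (by decide)
  have hs12 : 1 < x1 + x2 := ha 1 2 (by decide)
  set A1 : ℤ := Z1.1 - Z0.1 with hA1
  set A2 : ℤ := Z1.2 - Z0.2 with hA2
  set B1 : ℤ := Z2.1 - Z0.1 with hB1
  set B2 : ℤ := Z2.2 - Z0.2 with hB2
  have hp0 : p 0 = ((Z0.1 : ℝ), (Z0.2 : ℝ)) := hZ0
  have hp1 : p 1 = (((Z0.1 + A1 : ℤ) : ℝ), ((Z0.2 + A2 : ℤ) : ℝ)) := by
    rw [hZ1]; apply Prod.ext <;> rw [hA1, hA2] <;> push_cast <;> ring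
  have hp2 : p 2 = (((Z0.1 + B1 : ℤ) : ℝ), ((Z0.2 + B2 : ℤ) : ℝ)) := by
    rw [hZ2]; apply Prod.ext <;> rw [hB1, hB2] <;> push_cast <;> ring
  -- determinant is nonzero
  have hdetR := det_ne p haff
  have hdZ : A1 * B2 - A2 * B1 ≠ 0 := by
    intro h
    apply hdetR
    have c1 : (p 1 - p 0).1 = (A1 : ℝ) := by
      rw [hZ0, hZ1, hA1]; simp [Prod.fst_sub]
    have c2 : (p 1 - p 0).2 = (A2 : ℝ) := by
      rw [hZ0, hZ1, hA2]; simp [Prod.snd_sub]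
    have c3 : (p 2 - p 0).1 = (B1 : ℝ) := by
      rw [hZ0, hZ2, hB1]; simp [Prod.fst_sub]
    have c4 : (p 2 - p 0).2 = (B2 : ℝ) := by
      rw [hZ0, hZ2, hB2]; simp [Prod.snd_sub]
    rw [c1, c2, c3, c4]
    exact_mod_cast congrArg (fun z : ℤ => (z : ℝ)) h
  -- unimodularity
  have hgen := gen_lemma p honly A1 A2 B1 B2 Z0.1 Z0.2 hp0 hp1 hp2 hdZ
  obtain ⟨m1, n1, hmn1a, hmn1b⟩ := hgen 1 0
  obtain ⟨m2, n2, hmn2a, hmn2b⟩ := hgen 0 1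
  have hdet1 : A1 * B2 - A2 * B1 = 1 ∨ A1 * B2 - A2 * B1 = -1 := by
    have hkey : (A1 * B2 - A2 * B1) * (m1 * n2 - n1 * m2) = 1 := by
      calc (A1 * B2 - A2 * B1) * (m1 * n2 - n1 * m2)
          = (m1*A1 + n1*B1) * (m2*A2 + n2*B2) - (m1*A2 + n1*B2) * (m2*A1 + n2*B1) := by ring
        _ = 1 * 1 - 0 * 0 := by rw [← hmn1a, ← hmn1b, ← hmn2a, ← hmn2b]
        _ = 1 := by ring
    exact Int.isUnit_iff.mp (IsUnit.of_mul_eq_one _ hkey)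
  -- basic positivity
  have hD : 0 < x0 * x1 * x2 + (1 - x0) * (1 - x1) * (1 - x2) := by
    have a1 : 0 < x0 * x1 * x2 := by positivity
    have a2 : 0 < (1 - x0) * (1 - x1) * (1 - x2) := by
      apply mul_pos (mul_pos (by linarith) (by linarith)); linarith
    linarith
  set D : ℝ := x0 * x1 * x2 + (1 - x0) * (1 - x1) * (1 - x2) with hDdef
  set mm : ℝ := min x0 (min x1 x2) with hmm
  have hmmpos : 0 < mm := lt_min h00 (lt_min h10 h20)
  -- the q-p relations
  have hq0 : p 0 = (1 - x0) • q 1 + x0 • q 2 := by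
    have := hpq 0; rw [← hx0d] at this; simpa using this
  have hq1 : p 1 = (1 - x1) • q 2 + x1 • q 0 := by
    have := hpq 1; rw [← hx1d] at this; simpa using this
  have hq2 : p 2 = (1 - x2) • q 0 + x2 • q 1 := by
    have := hpq 2; rw [← hx2d] at this; simpa using this
  -- universal difference identities
  have hEs : ∀ v : ℝ × ℝ,
      D * (dot2 v (q 1) - dot2 v (q 0)) =
        -x0 * (dot2 v (p 1) - dot2 v (p 0)) + (x0 + x1 - 1) * (dot2 v (p 2) - dot2 v (p 0)) ∧
      D * (dot2 v (q 2) - dot2 v (q 1)) =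
        (1 - x2) * (dot2 v (p 1) - dot2 v (p 0)) - x1 * (dot2 v (p 2) - dot2 v (p 0)) := by
    intro v
    have hF0 : dot2 v (p 0) = (1 - x0) * dot2 v (q 1) + x0 * dot2 v (q 2) := by
      rw [hq0]; exact dot2_combo v (q 1) (q 2) (1 - x0) x0
    have hF1 : dot2 v (p 1) = (1 - x1) * dot2 v (q 2) + x1 * dot2 v (q 0) := by
      rw [hq1]; exact dot2_combo v (q 2) (q 0) (1 - x1) x1
    have hF2 : dot2 v (p 2) = (1 - x2) * dot2 v (q 0) + x2 * dot2 v (q 1) := by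
      rw [hq2]; exact dot2_combo v (q 0) (q 1) (1 - x2) x2
    constructor
    · rw [hDdef]; linear_combination (x1 - 1) * hF0 + x0 * hF1 - (x0 + x1 - 1) * hF2
    · rw [hDdef]; linear_combination (1 - x2 - x1) * hF0 - (1 - x2) * hF1 + x1 * hF2
  -- cast identities
  have hcast : ∀ u : ℤ × ℤ,
      dot2 ((u.1 : ℝ), (u.2 : ℝ)) (p 1) - dot2 ((u.1 : ℝ), (u.2 : ℝ)) (p 0) =
        ((u.1 * A1 + u.2 * A2 : ℤ) : ℝ) ∧
      dot2 ((u.1 : ℝ), (u.2 : ℝ)) (p 2) - dot2 ((u.1 : ℝ), (u.2 : ℝ)) (p 0) =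
        ((u.1 * B1 + u.2 * B2 : ℤ) : ℝ) := by
    intro u
    constructor
    · rw [hp0, hp1]; simp only [dot2]; push_cast; ring
    · rw [hp0, hp2]; simp only [dot2]; push_cast; ring
  -- lower bound for every admissible direction
  have hlow : ∀ w ∈ {w | ∃ u : ℤ × ℤ, u ≠ 0 ∧
      w = widthFn (convexHull ℝ (Set.range q)) ((u.1 : ℝ), (u.2 : ℝ))}, mm / D ≤ w := by
    rintro w ⟨u, hu, rfl⟩
    have hab : ¬(u.1 * A1 + u.2 * A2 = 0 ∧ u.1 * B1 + u.2 * B2 = 0) := by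
      rintro ⟨ha0, hb0⟩
      have h1 : u.1 * (A1 * B2 - A2 * B1) =
          B2 * (u.1 * A1 + u.2 * A2) - A2 * (u.1 * B1 + u.2 * B2) := by ring
      have h2 : u.2 * (A1 * B2 - A2 * B1) =
          A1 * (u.1 * B1 + u.2 * B2) - B1 * (u.1 * A1 + u.2 * A2) := by ring
      rw [ha0, hb0] at h1 h2
      simp only [mul_zero, sub_zero, zero_sub, mul_eq_zero] at h1 h2
      have hu1 : u.1 = 0 := by
        rcases h1 with h | h
        · exact h
        · exact absurd h hdZ
      have hu2 : u.2 = 0 := by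
        rcases h2 with h | h
        · exact h
        · exact absurd h hdZ
      exact hu (Prod.ext hu1 hu2)
    obtain ⟨hc1, hc2⟩ := hcast u
    obtain ⟨hE1, hE2⟩ := hEs ((u.1 : ℝ), (u.2 : ℝ))
    rw [hc1, hc2] at hE1 hE2
    rw [width_eval]
    exact core x0 x1 x2 h00 h01 h10 h11 h20 h21 hs01 hs02 hs12
      (u.1 * A1 + u.2 * A2) (u.1 * B1 + u.2 * B2) hab _ _ _
      (by rw [← hDdef]; exact hE1) (by rw [← hDdef]; exact hE2)
  -- choose the optimal direction
  obtain ⟨av, bv, habv, hb01u, hb01l, hb12u, hb12l, hb20u, hb20l⟩ :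
      ∃ av bv : ℤ, ¬(av = 0 ∧ bv = 0) ∧
        -x0 * (av : ℝ) + (x0 + x1 - 1) * (bv : ℝ) ≤ mm ∧
        -mm ≤ -x0 * (av : ℝ) + (x0 + x1 - 1) * (bv : ℝ) ∧
        (1 - x2) * (av : ℝ) - x1 * (bv : ℝ) ≤ mm ∧
        -mm ≤ (1 - x2) * (av : ℝ) - x1 * (bv : ℝ) ∧
        (x0 + x2 - 1) * (av : ℝ) + (1 - x0) * (bv : ℝ) ≤ mm ∧
        -mm ≤ (x0 + x2 - 1) * (av : ℝ) + (1 - x0) * (bv : ℝ) := by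
    rcases le_total x0 (min x1 x2) with h | h
    · have hmmx : mm = x0 := min_eq_left h
      have hx02 : x0 ≤ x2 := le_trans h (min_le_right _ _)
      refine ⟨1, 0, by simp, ?_, ?_, ?_, ?_, ?_, ?_⟩ <;> push_cast <;> rw [hmmx] <;> linarith
    · have hmmx : mm = min x1 x2 := min_eq_right h
      rcases le_total x1 x2 with h' | h'
      · have hmmy : mm = x1 := by rw [hmmx]; exact min_eq_left h'
        refine ⟨0, 1, by simp, ?_, ?_, ?_, ?_, ?_, ?_⟩ <;> push_cast <;> rw [hmmy] <;> linarith
      · have hmmy : mm = x2 := by rw [hmmx]; exact min_eq_right h'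
        have hx12 : x2 ≤ x1 := h'
        refine ⟨1, 1, by simp, ?_, ?_, ?_, ?_, ?_, ?_⟩ <;> push_cast <;> rw [hmmy] <;> linarith
  set d : ℤ := A1 * B2 - A2 * B1 with hd
  have hdd : d * d = 1 := by
    rcases hdet1 with h | h <;> rw [h] <;> norm_num
  set u : ℤ × ℤ := (d * (av * B2 - bv * A2), d * (bv * A1 - av * B1)) with hudef
  have hua : u.1 * A1 + u.2 * A2 = av := by
    rw [hudef]
    calc d * (av * B2 - bv * A2) * A1 + d * (bv * A1 - av * B1) * A2
        = av * (d * (A1 * B2 - A2 * B1)) := by ring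
      _ = av * (d * d) := by rw [← hd]
      _ = av := by rw [hdd]; ring
  have hub : u.1 * B1 + u.2 * B2 = bv := by
    rw [hudef]
    calc d * (av * B2 - bv * A2) * B1 + d * (bv * A1 - av * B1) * B2
        = bv * (d * (A1 * B2 - A2 * B1)) := by ring
      _ = bv * (d * d) := by rw [← hd]
      _ = bv := by rw [hdd]; ring
  have hu : u ≠ 0 := by
    intro h
    apply habv
    constructor
    · have := hua; rw [h] at this; simpa using this.symm
    · have := hub; rw [h] at this; simpa using this.symm
  -- compute the width of the optimal direction
  obtain ⟨hc1, hc2⟩ := hcast u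
  rw [hua] at hc1
  rw [hub] at hc2
  obtain ⟨hE1, hE2⟩ := hEs ((u.1 : ℝ), (u.2 : ℝ))
  rw [hc1, hc2] at hE1 hE2
  have hE3 : D * (dot2 ((u.1 : ℝ), (u.2 : ℝ)) (q 0) - dot2 ((u.1 : ℝ), (u.2 : ℝ)) (q 2)) =
      (x0 + x2 - 1) * (av : ℝ) + (1 - x0) * (bv : ℝ) := by linear_combination -hE1 - hE2
  have hwu : widthFn (convexHull ℝ (Set.range q)) ((u.1 : ℝ), (u.2 : ℝ)) = mm / D := by
    apply le_antisymm
    · rw [width_eval]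
      apply max3_min3_le _ _ _ _ (by positivity)
      all_goals rw [le_div_iff₀ hD]
      · linarith [hE1, hb01u]
      · linarith [hE1, hb01l]
      · linarith [hE2, hb12u]
      · linarith [hE2, hb12l]
      · linarith [hE3, hb20l]
      · linarith [hE3, hb20u]
    · exact hlow _ ⟨u, hu, rfl⟩
  -- conclude
  have hleast : IsLeast {w | ∃ u : ℤ × ℤ, u ≠ 0 ∧
      w = widthFn (convexHull ℝ (Set.range q)) ((u.1 : ℝ), (u.2 : ℝ))} (mm / D) :=
    ⟨⟨u, hu, hwu.symm⟩, hlow⟩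
  rw [latticeWidth]
  exact hleast.csInf_eq
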